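/- Let (Ω, 𝓕, P) be a probability space and (W_i)_{i≥1} a sequence of independent, identically distributed real-valued random variables whose common law μ is symmetric (μ is invariant under x ↦ −x) and atomless (has no atoms). Set S_k := ∑_{i=1}^k W_i. Then for every natural number n, P(S_1 < 0, S_2 < 0, …, S_n < 0, and S_{n+1} ≥ 0) ≥ 1 / (2(n+1) · √(π · (n + 1/3))). -/

import Mathlib

open MeasureTheory ProbabilityTheory Finset

noncomputable def fppA : ℕ → ℝ := fun n => ∏ k ∈ Finset.range n, ((2*(k:ℝ)+1)/(2*(k:ℝ)+2))

lemma fppA_zero : fppA 0 = 1 := by simp [fppA]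

lemma fppA_succ (n : ℕ) : fppA (n+1) = fppA n * ((2*(n:ℝ)+1)/(2*(n:ℝ)+2)) := by
  simp only [fppA]
  rw [Finset.prod_range_succ]

lemma fppA_pos (n : ℕ) : 0 < fppA n := by
  induction n with
  | zero => simp [fppA_zero]
  | succ n ih => rw [fppA_succ]; positivity

lemma fppA_succ_mul (m : ℕ) : ((m:ℝ)+1) * fppA (m+1) = fppA m * (2*(m:ℝ)+1)/2 := by
  rw [fppA_succ]
  have h : (2*(m:ℝ)+2) ≠ 0 := by positivity
  field_simp

lemma fppA_refl_half (m : ℕ) :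
    ∑ k ∈ range (m+1), ((m:ℝ)-k) * (fppA k * fppA (m-k))
      = (m:ℝ)/2 * ∑ k ∈ range (m+1), fppA k * fppA (m-k) := by
  have h1 : ∑ k ∈ range (m+1), ((m:ℝ)-k) * (fppA k * fppA (m-k))
      = ∑ k ∈ range (m+1), (k:ℝ) * (fppA k * fppA (m-k)) := by
    have := Finset.sum_range_reflect (fun k => (k:ℝ) * (fppA k * fppA (m-k))) (m+1)
    rw [← this]
    refine Finset.sum_congr rfl ?_
    intro k hk
    rw [Finset.mem_range] at hk
    have hk' : k ≤ m := Nat.lt_succ_iff.mp hk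
    have e1 : m + 1 - 1 - k = m - k := by omega
    have e2 : m - (m - k) = k := by omega
    rw [e1, e2, Nat.cast_sub hk']
    ring
  have h2 : ∑ k ∈ range (m+1), ((m:ℝ)-k) * (fppA k * fppA (m-k))
      + ∑ k ∈ range (m+1), (k:ℝ) * (fppA k * fppA (m-k))
      = (m:ℝ) * ∑ k ∈ range (m+1), fppA k * fppA (m-k) := by
    rw [← Finset.sum_add_distrib, Finset.mul_sum]
    refine Finset.sum_congr rfl fun k _ => by ring
  rw [h1] at h2 ⊢
  linarith [h2]

lemma fppA_conv (n : ℕ) : ∑ k ∈ Finset.range (n+1), fppA k * fppA (n-k) = 1 := by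
  induction n with
  | zero => simp [fppA_zero]
  | succ n ih =>
    set bN := ∑ k ∈ range (n+2), fppA k * fppA (n+1-k) with hbN
    -- (★): sum over k ≤ n of ((n+1:ℝ)-k) a_k a_{n+1-k} = ((n+1)/2) bN
    have star : ∑ k ∈ range (n+1), (((n:ℝ)+1)-k) * (fppA k * fppA (n+1-k))
        = ((n:ℝ)+1)/2 * bN := by
      have h := fppA_refl_half (n+1)
      push_cast at h
      rw [Finset.sum_range_succ] at h
      have hz : (((n:ℝ)+1) - ((n+1:ℕ):ℝ)) * (fppA (n+1) * fppA ((n+1)-(n+1))) = 0 := by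
        push_cast; ring
      rw [hz, add_zero] at h
      rw [h, hbN]
    -- rewrite LHS of star using the recurrence
    have lhs_eq : ∑ k ∈ range (n+1), (((n:ℝ)+1)-k) * (fppA k * fppA (n+1-k))
        = ∑ k ∈ range (n+1), (((n:ℝ)-k) * (fppA k * fppA (n-k))
            + (fppA k * fppA (n-k))/2) := by
      refine Finset.sum_congr rfl ?_
      intro k hk
      rw [Finset.mem_range] at hk
      have hk' : k ≤ n := Nat.lt_succ_iff.mp hk
      have e1 : n + 1 - k = (n - k) + 1 := by omega
      have e2 : (((n - k : ℕ)):ℝ) = (n:ℝ) - k := by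
        rw [Nat.cast_sub hk']
      have hrec := fppA_succ_mul (n - k)
      rw [e2] at hrec
      rw [e1]
      have : ((n:ℝ)+1-k) * fppA ((n-k)+1) = fppA (n-k) * (2*((n:ℝ)-k)+1)/2 := by
        have : (n:ℝ)+1-k = ((n:ℝ)-k)+1 := by ring
        rw [this]; exact hrec
      calc (((n:ℝ)+1)-k) * (fppA k * fppA ((n-k)+1))
          = fppA k * ((((n:ℝ)+1-k)) * fppA ((n-k)+1)) := by ring
        _ = fppA k * (fppA (n-k) * (2*((n:ℝ)-k)+1)/2) := by rw [this]
        _ = ((n:ℝ)-k) * (fppA k * fppA (n-k)) + (fppA k * fppA (n-k))/2 := by ring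
    rw [lhs_eq] at star
    rw [Finset.sum_add_distrib, fppA_refl_half n] at star
    -- ∑ (a_k a_{n-k})/2 = (1/2) * ∑ = 1/2 by ih
    have h3 : ∑ k ∈ range (n+1), (fppA k * fppA (n-k))/2 = 1/2 := by
      rw [← Finset.sum_div, ih]
    rw [h3, ih] at star
    have hpos : ((n:ℝ)+1)/2 ≠ 0 := by positivity
    have : ((n:ℝ)+1)/2 * bN = ((n:ℝ)+1)/2 * 1 := by
      rw [mul_one]; linarith [star]
    have := mul_left_cancel₀ hpos this
    simpa using this

open Real in
lemma fppA_sq_W (n : ℕ) : fppA n ^ 2 * ((2*(n:ℝ)+1) * Real.Wallis.W n) = 1 := by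
  induction n with
  | zero => simp [fppA_zero, Real.Wallis.W]
  | succ n ih =>
    rw [fppA_succ, Real.Wallis.W_succ]
    have h1 : (2*(n:ℝ)+1) ≠ 0 := by positivity
    have h2 : (2*(n:ℝ)+2) ≠ 0 := by positivity
    have h3 : (2*(n:ℝ)+3) ≠ 0 := by positivity
    have hA := (fppA_pos n).ne'
    have hW : Real.Wallis.W n = 1 / (fppA n ^ 2 * (2*(n:ℝ)+1)) := by
      rw [eq_div_iff (by positivity)]
      linear_combination ih
    rw [hW]
    push_cast
    field_simp
    ring

noncomputable def fppR : ℕ → ℝ := fun n => Real.pi * ((n:ℝ) + 1/3) * fppA n ^ 2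

lemma fppR_antitone : Antitone fppR := by
  refine antitone_nat_of_succ_le fun n => ?_
  simp only [fppR]
  rw [fppA_succ]
  have hA := fppA_pos n
  have hpi := Real.pi_pos
  have h2 : (0:ℝ) < (2*(n:ℝ)+2) := by positivity
  push_cast
  rw [mul_pow, div_pow]
  have key : ((n:ℝ)+1+1/3) * ((2*(n:ℝ)+1)^2 / (2*(n:ℝ)+2)^2) ≤ (n:ℝ)+1/3 := by
    rw [mul_div_assoc', div_le_iff₀ (by positivity : (0:ℝ) < (2*(n:ℝ)+2)^2)]
    nlinarith [Nat.cast_nonneg (α := ℝ) n]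
  calc Real.pi * ((n:ℝ)+1+1/3) * (fppA n ^2 * ((2*(n:ℝ)+1)^2/(2*(n:ℝ)+2)^2))
      = Real.pi * (fppA n ^2) * (((n:ℝ)+1+1/3) * ((2*(n:ℝ)+1)^2/(2*(n:ℝ)+2)^2)) := by ring
    _ ≤ Real.pi * (fppA n ^2) * ((n:ℝ)+1/3) := by
        refine mul_le_mul_of_nonneg_left key (by positivity)
    _ = Real.pi * ((n:ℝ)+1/3) * fppA n ^2 := by ring

open Filter Topology in
lemma fppR_tendsto : Tendsto fppR atTop (𝓝 1) := by
  have hW := Real.Wallis.tendsto_W_nhds_pi_div_two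
  have heq : ∀ n : ℕ, fppR n = (Real.pi/2 - (Real.pi/6)/(2*(n:ℝ)+1)) / Real.Wallis.W n := by
    intro n
    have h1 : (2*(n:ℝ)+1) ≠ 0 := by positivity
    have hWpos := Real.Wallis.W_pos n
    have hid := fppA_sq_W n
    have hA2 : fppA n ^ 2 = 1 / ((2*(n:ℝ)+1) * Real.Wallis.W n) := by
      field_simp at hid ⊢
      linarith [hid]
    simp only [fppR, hA2]
    field_simp
    ring
  have hnum : Tendsto (fun n : ℕ => Real.pi/2 - (Real.pi/6)/(2*(n:ℝ)+1)) atTop (𝓝 (Real.pi/2)) := by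
    have h0 : Tendsto (fun n : ℕ => (Real.pi/6)/(2*(n:ℝ)+1)) atTop (𝓝 0) := by
      apply Tendsto.div_atTop tendsto_const_nhds
      apply Filter.tendsto_atTop_add_const_right
      exact (tendsto_natCast_atTop_atTop (R := ℝ)).const_mul_atTop two_pos
    simpa using (tendsto_const_nhds (x := Real.pi/2) (f := atTop)).sub h0
  have := hnum.div hW (by positivity : Real.pi/2 ≠ 0)
  rw [div_self (by positivity : Real.pi/2 ≠ 0)] at this
  exact (funext heq : fppR = _) ▸ this

lemma one_le_fppR (n : ℕ) : 1 ≤ fppR n := fppR_antitone.le_of_tendsto fppR_tendsto n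

lemma fppA_lower (n : ℕ) : 1 / Real.sqrt (Real.pi * ((n:ℝ) + 1/3)) ≤ fppA n := by
  have h1 := one_le_fppR n
  simp only [fppR] at h1
  have hx : (0:ℝ) < Real.pi * ((n:ℝ)+1/3) := by positivity
  have hA := fppA_pos n
  rw [div_le_iff₀ (Real.sqrt_pos.mpr hx)]
  nlinarith [Real.sq_sqrt hx.le, Real.sqrt_pos.mpr hx, mul_pos hA (Real.sqrt_pos.mpr hx), sq_nonneg (fppA n * Real.sqrt (Real.pi * ((n:ℝ)+1/3)) - 1), sq_nonneg (fppA n * Real.sqrt (Real.pi * ((n:ℝ)+1/3)) + 1)]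

open MeasureTheory ProbabilityTheory Finset

noncomputable def fppPsum (m k : ℕ) (y : Fin m → ℝ) : ℝ :=
  ∑ i ∈ Finset.range k, (if h : i < m then y ⟨i, h⟩ else 0)

lemma measurable_fppPsum (m k : ℕ) : Measurable (fppPsum m k) := by
  apply Finset.measurable_sum
  intro i _
  by_cases h : i < m
  · simpa [h] using measurable_pi_apply (⟨i, h⟩ : Fin m)
  · simpa [h] using measurable_const

def fppAneg (m : ℕ) : Set (Fin m → ℝ) := {y | ∀ k, 1 ≤ k → k ≤ m → fppPsum m k y < 0}
def fppApos (m : ℕ) : Set (Fin m → ℝ) := {y | ∀ k, 1 ≤ k → k ≤ m → 0 < fppPsum m k y}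

lemma measurableSet_fppAneg (m : ℕ) : MeasurableSet (fppAneg m) := by
  have h : fppAneg m = ⋂ k : ℕ, {y | 1 ≤ k → k ≤ m → fppPsum m k y < 0} := by
    ext y; simp [fppAneg, Set.mem_iInter]
  rw [h]
  refine MeasurableSet.iInter fun k => ?_
  by_cases h1 : 1 ≤ k ∧ k ≤ m
  · have : {y : Fin m → ℝ | 1 ≤ k → k ≤ m → fppPsum m k y < 0} = {y | fppPsum m k y < 0} := by
      ext y; simp [h1.1, h1.2]
    rw [this]
    exact measurableSet_lt (measurable_fppPsum m k) measurable_const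
  · have : {y : Fin m → ℝ | 1 ≤ k → k ≤ m → fppPsum m k y < 0} = Set.univ := by
      ext y; simp only [Set.mem_setOf_eq, Set.mem_univ, iff_true]
      intro hk1 hk2; exact absurd ⟨hk1, hk2⟩ h1
    rw [this]; exact MeasurableSet.univ

lemma measurableSet_fppApos (m : ℕ) : MeasurableSet (fppApos m) := by
  have h : fppApos m = ⋂ k : ℕ, {y | 1 ≤ k → k ≤ m → 0 < fppPsum m k y} := by
    ext y; simp [fppApos, Set.mem_iInter]
  rw [h]
  refine MeasurableSet.iInter fun k => ?_
  by_cases h1 : 1 ≤ k ∧ k ≤ m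
  · have : {y : Fin m → ℝ | 1 ≤ k → k ≤ m → 0 < fppPsum m k y} = {y | 0 < fppPsum m k y} := by
      ext y; simp [h1.1, h1.2]
    rw [this]
    exact measurableSet_lt measurable_const (measurable_fppPsum m k)
  · have : {y : Fin m → ℝ | 1 ≤ k → k ≤ m → 0 < fppPsum m k y} = Set.univ := by
      ext y; simp only [Set.mem_setOf_eq, Set.mem_univ, iff_true]
      intro hk1 hk2; exact absurd ⟨hk1, hk2⟩ h1
    rw [this]; exact MeasurableSet.univ

section FPPProb

variable {Ω : Type*} [MeasurableSpace Ω] {P : Measure Ω} [IsProbabilityMeasure P]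
  {μ : Measure ℝ} {W : ℕ → Ω → ℝ}

lemma fpp_map_tuple (hmeas : ∀ i, Measurable (W i)) (hdist : ∀ i, P.map (W i) = μ)
    (hindep : iIndepFun W P)
    (m : ℕ) (f : Fin m → ℕ) (hf : Function.Injective f) :
    P.map (fun ω (i : Fin m) => W (f i) ω) = Measure.pi (fun _ => μ) := by
  classical
  haveI : IsProbabilityMeasure μ := by
    rw [← hdist 0]; exact Measure.isProbabilityMeasure_map (hmeas 0).aemeasurable
  refine (Measure.pi_eq (μ := fun _ : Fin m => μ) ?_).symm
  intro s hs
  rw [Measure.map_apply (measurable_pi_lambda _ fun i => hmeas (f i)) (MeasurableSet.univ_pi hs)]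
  set sets : ℕ → Set ℝ := fun j => ⋂ (i : Fin m) (_ : f i = j), s i with hsets
  have hsets_meas : ∀ j, MeasurableSet (sets j) :=
    fun j => MeasurableSet.iInter fun i => MeasurableSet.iInter fun _ => hs i
  have hsets_eq : ∀ i₀ : Fin m, sets (f i₀) = s i₀ := by
    intro i₀
    ext x
    simp only [hsets, Set.mem_iInter]
    constructor
    · intro h; exact h i₀ rfl
    · intro hx i hfi
      have : i = i₀ := hf hfi
      subst this; exact hx
  have hpre : (fun ω (i : Fin m) => W (f i) ω) ⁻¹' (Set.univ.pi s)
      = ⋂ j ∈ Finset.image f Finset.univ, W j ⁻¹' sets j := by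
    ext ω
    simp only [Set.mem_preimage, Set.mem_pi, Set.mem_univ, forall_true_left, Set.mem_iInter,
      Finset.mem_image, Finset.mem_univ, true_and]
    constructor
    · rintro h j ⟨i, rfl⟩
      rw [hsets_eq i]; exact h i
    · intro h i
      have := h (f i) ⟨i, rfl⟩
      rwa [hsets_eq i] at this
  rw [hpre, hindep.measure_inter_preimage_eq_mul _ (fun j _ => hsets_meas j),
    Finset.prod_image (fun i _ j _ h => hf h)]
  refine Finset.prod_congr rfl fun i _ => ?_
  rw [hsets_eq i, ← hdist (f i), Measure.map_apply (hmeas (f i)) (hs i)]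

lemma fpp_prob_tuple (hmeas : ∀ i, Measurable (W i)) (hdist : ∀ i, P.map (W i) = μ)
    (hindep : iIndepFun W P)
    (m : ℕ) (f : Fin m → ℕ) (hf : Function.Injective f)
    {A : Set (Fin m → ℝ)} (hA : MeasurableSet A) :
    P ((fun ω (i : Fin m) => W (f i) ω) ⁻¹' A) = Measure.pi (fun _ => μ) A := by
  rw [← fpp_map_tuple hmeas hdist hindep m f hf,
    Measure.map_apply (measurable_pi_lambda _ fun i => hmeas (f i)) hA]

end FPPProb

section FPPNeg

variable {μ : Measure ℝ} [IsProbabilityMeasure μ]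

lemma fpp_pi_neg (hsym : μ.map (fun x => -x) = μ) (m : ℕ) :
    (Measure.pi (fun _ : Fin m => μ)).map (fun y (i : Fin m) => - y i)
      = Measure.pi (fun _ => μ) := by
  have hmeasneg : Measurable fun (y : Fin m → ℝ) (i : Fin m) => - y i :=
    measurable_pi_lambda _ fun i => (measurable_pi_apply i).neg
  refine (Measure.pi_eq (μ := fun _ : Fin m => μ) ?_).symm
  intro s hs
  rw [Measure.map_apply hmeasneg (MeasurableSet.univ_pi hs)]
  have hpre : (fun y (i : Fin m) => - y i) ⁻¹' (Set.univ.pi s)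
      = Set.univ.pi (fun i => (fun x : ℝ => -x) ⁻¹' s i) := by
    ext y; simp [Set.mem_pi]
  rw [hpre, Measure.pi_pi]
  refine Finset.prod_congr rfl fun i _ => ?_
  conv_rhs => rw [← hsym]
  rw [Measure.map_apply measurable_neg (hs i)]

lemma fpp_apos_eq_aneg (hsym : μ.map (fun x => -x) = μ) (m : ℕ) :
    Measure.pi (fun _ : Fin m => μ) (fppApos m) = Measure.pi (fun _ : Fin m => μ) (fppAneg m) := by
  have hmeasneg : Measurable fun (y : Fin m → ℝ) (i : Fin m) => - y i :=
    measurable_pi_lambda _ fun i => (measurable_pi_apply i).neg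
  have hpsum : ∀ (k : ℕ) (y : Fin m → ℝ), fppPsum m k (fun i => - y i) = - fppPsum m k y := by
    intro k y
    simp only [fppPsum, ← Finset.sum_neg_distrib]
    refine Finset.sum_congr rfl fun i _ => ?_
    by_cases h : i < m <;> simp [h]
  have hset : fppApos m = (fun y (i : Fin m) => - y i) ⁻¹' fppAneg m := by
    ext y
    simp only [fppApos, fppAneg, Set.mem_preimage, Set.mem_setOf_eq]
    constructor
    · intro h k h1 h2; rw [hpsum]; linarith [h k h1 h2]
    · intro h k h1 h2; have := h k h1 h2; rw [hpsum] at this; linarith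
  rw [hset, ← Measure.map_apply hmeasneg (measurableSet_fppAneg m), fpp_pi_neg hsym]

end FPPNeg

section FPPTies

variable {Ω : Type*} [MeasurableSpace Ω] {P : Measure Ω} [IsProbabilityMeasure P]
  {μ : Measure ℝ} [NullSingletonClass μ] {W : ℕ → Ω → ℝ}

lemma fpp_ties (hmeas : ∀ i, Measurable (W i)) (hdist : ∀ i, P.map (W i) = μ)
    (hindep : iIndepFun W P)
    {j k : ℕ} (hjk : j < k) :
    P {ω | ∑ i ∈ Finset.range j, W i ω = ∑ i ∈ Finset.range k, W i ω} = 0 := by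
  classical
  haveI : IsProbabilityMeasure μ := by
    rw [← hdist 0]; exact Measure.isProbabilityMeasure_map (hmeas 0).aemeasurable
  set R : Ω → ℝ := fun ω => ∑ i ∈ Finset.Ico (j+1) k, W i ω with hR
  have hmR : Measurable R := Finset.measurable_sum _ fun i _ => hmeas i
  have hnotmem : j ∉ Finset.Ico (j+1) k := by simp
  have hind : IndepFun (∑ i ∈ Finset.Ico (j+1) k, W i) (W j) P :=
    hindep.indepFun_finsetSum_of_notMem hmeas hnotmem
  have hind' : IndepFun R (W j) P := by
    have : (∑ i ∈ Finset.Ico (j+1) k, W i) = R := by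
      funext ω; simp [hR, Finset.sum_apply]
    rwa [this] at hind
  have hmap : P.map (fun ω => (R ω, W j ω)) = (P.map R).prod μ := by
    rw [← hdist j]
    exact (indepFun_iff_map_prod_eq_prod_map_map hmR.aemeasurable (hmeas j).aemeasurable).mp hind'
  have hSset : MeasurableSet {p : ℝ × ℝ | p.1 + p.2 = 0} :=
    (measurable_fst.add measurable_snd) (measurableSet_singleton 0)
  have hevent : {ω | ∑ i ∈ Finset.range j, W i ω = ∑ i ∈ Finset.range k, W i ω}
      = (fun ω => (R ω, W j ω)) ⁻¹' {p : ℝ × ℝ | p.1 + p.2 = 0} := by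
    ext ω
    simp only [Set.mem_setOf_eq, Set.mem_preimage]
    have hsplit : ∑ i ∈ Finset.range k, W i ω
        = ∑ i ∈ Finset.range j, W i ω + (W j ω + R ω) := by
      rw [← Finset.sum_range_add_sum_Ico (fun i => W i ω) hjk.le,
        Finset.sum_eq_sum_Ico_succ_bot hjk]
    rw [hsplit]
    constructor <;> intro h <;> linarith
  rw [hevent, ← Measure.map_apply (hmR.prodMk (hmeas j)) hSset, hmap,
    Measure.prod_apply hSset]
  have hzero : ∀ x : ℝ, μ (Prod.mk x ⁻¹' {p : ℝ × ℝ | p.1 + p.2 = 0}) = 0 := by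
    intro x
    have : Prod.mk x ⁻¹' {p : ℝ × ℝ | p.1 + p.2 = 0} = {-x} := by
      ext y
      simp only [Set.mem_preimage, Set.mem_setOf_eq, Set.mem_singleton_iff]
      constructor <;> intro h <;> linarith
    rw [this]
    exact measure_singleton _
  rw [lintegral_congr hzero, lintegral_zero]

end FPPTies

section FPPMin

variable {Ω : Type*} [MeasurableSpace Ω]

/-- reversal tuple event: the walk at time `k` is strictly below all earlier times -/
def fppB (W : ℕ → Ω → ℝ) (k : ℕ) : Set Ω :=
  (fun ω (i : Fin k) => W (k - 1 - (i:ℕ)) ω) ⁻¹' fppAneg k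

/-- shift tuple event: the walk at time `k` is strictly below all times in `(k, n]` -/
def fppC (W : ℕ → Ω → ℝ) (n k : ℕ) : Set Ω :=
  (fun ω (t : Fin (n-k)) => W (k + (t:ℕ)) ω) ⁻¹' fppApos (n-k)

variable {W : ℕ → Ω → ℝ}

lemma fpp_mem_B {k : ℕ} {ω : Ω} :
    ω ∈ fppB W k ↔ ∀ j, j < k →
      ∑ i ∈ Finset.range k, W i ω < ∑ i ∈ Finset.range j, W i ω := by
  have hpsum : ∀ m, 1 ≤ m → m ≤ k →
      fppPsum k m (fun i : Fin k => W (k - 1 - (i:ℕ)) ω)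
        = ∑ i ∈ Finset.range k, W i ω - ∑ i ∈ Finset.range (k-m), W i ω := by
    intro m h1 hm
    have e1 : fppPsum k m (fun i : Fin k => W (k - 1 - (i:ℕ)) ω)
        = ∑ t ∈ Finset.range m, W (k - 1 - t) ω := by
      simp only [fppPsum]
      refine Finset.sum_congr rfl fun t ht => ?_
      rw [Finset.mem_range] at ht
      have h : t < k := lt_of_lt_of_le ht hm
      simp [h]
    have e2 : ∑ t ∈ Finset.range m, W ((k-m) + t) ω = ∑ t ∈ Finset.range m, W (k - 1 - t) ω := by
      have := Finset.sum_range_reflect (fun t => W ((k-m) + t) ω) m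
      rw [← this]
      refine Finset.sum_congr rfl fun t ht => ?_
      rw [Finset.mem_range] at ht
      congr 1
      omega
    have e3 : ∑ i ∈ Finset.Ico (k-m) k, W i ω = ∑ t ∈ Finset.range m, W ((k-m) + t) ω := by
      have hkm : k - (k - m) = m := by omega
      rw [Finset.sum_Ico_eq_sum_range, hkm]
    have e4 : ∑ i ∈ Finset.Ico (k-m) k, W i ω
        = ∑ i ∈ Finset.range k, W i ω - ∑ i ∈ Finset.range (k-m), W i ω :=
      Finset.sum_Ico_eq_sub _ (by omega)
    rw [e1, ← e2, ← e3, e4]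
  constructor
  · intro h j hj
    have hm := h (k - j) (by omega) (by omega)
    rw [hpsum (k-j) (by omega) (by omega)] at hm
    have : k - (k - j) = j := by omega
    rw [this] at hm
    linarith
  · intro h m h1 hm
    rw [hpsum m h1 hm]
    have := h (k - m) (by omega)
    linarith

lemma fpp_mem_C {n k : ℕ} (hk : k ≤ n) {ω : Ω} :
    ω ∈ fppC W n k ↔ ∀ j, k < j → j ≤ n →
      ∑ i ∈ Finset.range k, W i ω < ∑ i ∈ Finset.range j, W i ω := by
  have hpsum : ∀ m, 1 ≤ m → m ≤ n - k →
      fppPsum (n-k) m (fun t : Fin (n-k) => W (k + (t:ℕ)) ω)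
        = ∑ i ∈ Finset.range (k+m), W i ω - ∑ i ∈ Finset.range k, W i ω := by
    intro m h1 hm
    have e1 : fppPsum (n-k) m (fun t : Fin (n-k) => W (k + (t:ℕ)) ω)
        = ∑ t ∈ Finset.range m, W (k + t) ω := by
      simp only [fppPsum]
      refine Finset.sum_congr rfl fun t ht => ?_
      rw [Finset.mem_range] at ht
      have h : t < n - k := lt_of_lt_of_le ht hm
      simp [h]
    have e3 : ∑ i ∈ Finset.Ico k (k+m), W i ω = ∑ t ∈ Finset.range m, W (k + t) ω := by
      have hkm : k + m - k = m := by omega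
      rw [Finset.sum_Ico_eq_sum_range, hkm]
    have e4 : ∑ i ∈ Finset.Ico k (k+m), W i ω
        = ∑ i ∈ Finset.range (k+m), W i ω - ∑ i ∈ Finset.range k, W i ω :=
      Finset.sum_Ico_eq_sub _ (by omega)
    rw [e1, ← e3, e4]
  constructor
  · intro h j hj hjn
    have hm := h (j - k) (by omega) (by omega)
    rw [hpsum (j-k) (by omega) (by omega)] at hm
    have : k + (j - k) = j := by omega
    rw [this] at hm
    linarith
  · intro h m h1 hm
    rw [hpsum m h1 hm]
    have := h (k + m) (by omega) (by omega)
    linarith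

lemma fppB_measurable (hmeas : ∀ i, Measurable (W i)) (k : ℕ) : MeasurableSet (fppB W k) :=
  (measurable_pi_lambda _ fun i => hmeas _) (measurableSet_fppAneg k)

lemma fppC_measurable (hmeas : ∀ i, Measurable (W i)) (n k : ℕ) : MeasurableSet (fppC W n k) :=
  (measurable_pi_lambda _ fun i => hmeas _) (measurableSet_fppApos (n-k))

end FPPMin

section FPPCore

variable {Ω : Type*} [MeasurableSpace Ω] {P : Measure Ω} [IsProbabilityMeasure P]
  {μ : Measure ℝ} {W : ℕ → Ω → ℝ}

lemma fpp_prob_M (hmeas : ∀ i, Measurable (W i)) (hdist : ∀ i, P.map (W i) = μ)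
    (hindep : iIndepFun W P)
    {n k : ℕ} (hk : k ≤ n) :
    P (fppB W k ∩ fppC W n k)
      = Measure.pi (fun _ : Fin k => μ) (fppAneg k)
        * Measure.pi (fun _ : Fin (n-k) => μ) (fppApos (n-k)) := by
  classical
  set G₁ : (∀ _i : (Finset.range k : Finset ℕ), ℝ) → (Fin k → ℝ) :=
    fun v i => v ⟨k - 1 - (i:ℕ), Finset.mem_range.mpr (by have := i.isLt; omega)⟩ with hG₁def
  set G₂ : (∀ _i : (Finset.Ico k n : Finset ℕ), ℝ) → (Fin (n-k) → ℝ) :=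
    fun v t => v ⟨k + (t:ℕ), Finset.mem_Ico.mpr (by have := t.isLt; omega)⟩ with hG₂def
  have hG₁ : Measurable G₁ := measurable_pi_lambda _ fun i => measurable_pi_apply _
  have hG₂ : Measurable G₂ := measurable_pi_lambda _ fun t => measurable_pi_apply _
  have hdisj : Disjoint (Finset.range k) (Finset.Ico k n) := by
    rw [Finset.disjoint_left]
    intro a ha hb
    rw [Finset.mem_range] at ha
    rw [Finset.mem_Ico] at hb
    omega
  have hIndep :=
    (hindep.indepFun_finset (Finset.range k) (Finset.Ico k n) hdisj hmeas).comp hG₁ hG₂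
  have hmul := hIndep.measure_inter_preimage_eq_mul _ _
    (measurableSet_fppAneg k) (measurableSet_fppApos (n-k))
  have hBeq : (G₁ ∘ fun a (i : (Finset.range k : Finset ℕ)) => W i a) ⁻¹' fppAneg k
      = fppB W k := rfl
  have hCeq : (G₂ ∘ fun a (i : (Finset.Ico k n : Finset ℕ)) => W i a) ⁻¹' fppApos (n-k)
      = fppC W n k := rfl
  rw [hBeq, hCeq] at hmul
  rw [hmul]
  congr 1
  · exact fpp_prob_tuple hmeas hdist hindep k (fun i => k - 1 - (i:ℕ))
      (fun a b h => by
        have ha := a.isLt; have hb := b.isLt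
        have h' : k - 1 - (a:ℕ) = k - 1 - (b:ℕ) := h
        exact Fin.ext (by omega))
      (measurableSet_fppAneg k)
  · exact fpp_prob_tuple hmeas hdist hindep (n-k) (fun t => k + (t:ℕ))
      (fun a b h => by
        have h' : k + (a:ℕ) = k + (b:ℕ) := h
        exact Fin.ext (by omega))
      (measurableSet_fppApos (n-k))

lemma fpp_partition [NullSingletonClass μ] (hmeas : ∀ i, Measurable (W i)) (hdist : ∀ i, P.map (W i) = μ)
    (hindep : iIndepFun W P) (n : ℕ) :
    ∑ k ∈ Finset.range (n+1), P (fppB W k ∩ fppC W n k) = 1 := by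
  classical
  have hM : ∀ k, MeasurableSet (fppB W k ∩ fppC W n k) := fun k =>
    (fppB_measurable hmeas k).inter (fppC_measurable hmeas n k)
  have hdisjoint : Set.PairwiseDisjoint (Finset.range (n+1) : Set ℕ)
      (fun k => fppB W k ∩ fppC W n k) := by
    intro k hk l hl hne
    rw [Finset.coe_range, Set.mem_Iio] at hk hl
    have hk' : k ≤ n := by omega
    have hl' : l ≤ n := by omega
    rw [Function.onFun, Set.disjoint_left]
    intro ω hωk hωl
    rcases lt_or_gt_of_ne hne with h | h
    · have h1 := ((fpp_mem_C hk').mp hωk.2) l h hl'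
      have h2 := (fpp_mem_B.mp hωl.1) k h
      linarith
    · have h1 := ((fpp_mem_C hl').mp hωl.2) k h hk'
      have h2 := (fpp_mem_B.mp hωk.1) l h
      linarith
  have hsum := measure_biUnion_finset (μ := P) hdisjoint (fun k _ => hM k)
  rw [← hsum]
  -- the union has full measure
  set G : Set Ω := {ω | ∀ j l, j < l → l ≤ n →
    ∑ i ∈ Finset.range j, W i ω ≠ ∑ i ∈ Finset.range l, W i ω} with hG
  have hGc : Gᶜ ⊆ ⋃ (j : ℕ) (l : ℕ) (_ : j < l) (_ : l ≤ n),
      {ω | ∑ i ∈ Finset.range j, W i ω = ∑ i ∈ Finset.range l, W i ω} := by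
    intro ω hω
    simp only [hG, Set.mem_compl_iff, Set.mem_setOf_eq] at hω
    push_neg at hω
    obtain ⟨j, l, hjl, hln, heq⟩ := hω
    exact Set.mem_iUnion.mpr ⟨j, Set.mem_iUnion.mpr ⟨l, Set.mem_iUnion.mpr ⟨hjl,
      Set.mem_iUnion.mpr ⟨hln, heq⟩⟩⟩⟩
  have hGcnull : P Gᶜ = 0 := by
    refine measure_mono_null hGc ?_
    refine measure_iUnion_null fun j => measure_iUnion_null fun l =>
      measure_iUnion_null fun hjl => measure_iUnion_null fun _ =>
      fpp_ties hmeas hdist hindep hjl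
  have hcover : Set.univ ⊆ (⋃ k ∈ Finset.range (n+1), (fppB W k ∩ fppC W n k)) ∪ Gᶜ := by
    intro ω _
    by_cases hωG : ω ∈ G
    · left
      obtain ⟨k₀, hk₀mem, hmin⟩ := Finset.exists_min_image (Finset.range (n+1))
        (fun k => ∑ i ∈ Finset.range k, W i ω) ⟨0, by simp⟩
      rw [Finset.mem_range] at hk₀mem
      have hk₀ : k₀ ≤ n := by omega
      refine Set.mem_iUnion.mpr ⟨k₀, Set.mem_iUnion.mpr
        ⟨Finset.mem_range.mpr hk₀mem, ?_⟩⟩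
      constructor
      · rw [fpp_mem_B]
        intro j hj
        have hle := hmin j (Finset.mem_range.mpr (by omega))
        have hne := hωG j k₀ hj hk₀
        exact lt_of_le_of_ne hle (by exact fun hc => hne hc.symm)
      · rw [fpp_mem_C hk₀]
        intro j hj hjn
        have hle := hmin j (Finset.mem_range.mpr (by omega))
        have hne := hωG k₀ j hj hjn
        exact lt_of_le_of_ne hle hne
    · right; exact hωG
  have h1 : (1:ENNReal) ≤ P (⋃ k ∈ Finset.range (n+1), (fppB W k ∩ fppC W n k)) := by
    calc (1:ENNReal) = P Set.univ := (measure_univ).symm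
      _ ≤ P ((⋃ k ∈ Finset.range (n+1), (fppB W k ∩ fppC W n k)) ∪ Gᶜ) := measure_mono hcover
      _ ≤ P (⋃ k ∈ Finset.range (n+1), (fppB W k ∩ fppC W n k)) + P Gᶜ := measure_union_le _ _
      _ = P (⋃ k ∈ Finset.range (n+1), (fppB W k ∩ fppC W n k)) := by rw [hGcnull, add_zero]
  exact le_antisymm prob_le_one h1

end FPPCore

section FPPConv

variable {Ω : Type*} [MeasurableSpace Ω] {P : Measure Ω} [IsProbabilityMeasure P]
  {μ : Measure ℝ} {W : ℕ → Ω → ℝ}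

lemma fpp_conv [NullSingletonClass μ] (hsym : μ.map (fun x => -x) = μ)
    (hmeas : ∀ i, Measurable (W i)) (hdist : ∀ i, P.map (W i) = μ)
    (hindep : iIndepFun W P) (n : ℕ) :
    ∑ k ∈ Finset.range (n+1),
      (Measure.pi (fun _ : Fin k => μ) (fppAneg k)).toReal
        * (Measure.pi (fun _ : Fin (n-k) => μ) (fppAneg (n-k))).toReal = 1 := by
  haveI : IsProbabilityMeasure μ := by
    rw [← hdist 0]; exact Measure.isProbabilityMeasure_map (hmeas 0).aemeasurable
  have h := fpp_partition hmeas hdist hindep n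
  have hterm : ∀ k ∈ Finset.range (n+1), P (fppB W k ∩ fppC W n k)
      = Measure.pi (fun _ : Fin k => μ) (fppAneg k)
        * Measure.pi (fun _ : Fin (n-k) => μ) (fppAneg (n-k)) := by
    intro k hk
    rw [Finset.mem_range] at hk
    rw [fpp_prob_M hmeas hdist hindep (by omega : k ≤ n), fpp_apos_eq_aneg hsym]
  rw [Finset.sum_congr rfl hterm] at h
  have h' := congrArg ENNReal.toReal h
  rw [ENNReal.toReal_sum (fun k _ => by
    exact ENNReal.mul_ne_top (measure_ne_top _ _) (measure_ne_top _ _))] at h'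
  simpa [ENNReal.toReal_mul] using h'

lemma fpp_window (hmeas : ∀ i, Measurable (W i)) (hdist : ∀ i, P.map (W i) = μ)
    (hindep : iIndepFun W P) (m : ℕ) :
    P {ω | ∀ k, 1 ≤ k → k ≤ m → (∑ i ∈ Finset.range k, W i ω) < 0}
      = Measure.pi (fun _ : Fin m => μ) (fppAneg m) := by
  have hset : {ω | ∀ k, 1 ≤ k → k ≤ m → (∑ i ∈ Finset.range k, W i ω) < 0}
      = (fun ω (i : Fin m) => W ((i:ℕ)) ω) ⁻¹' fppAneg m := by
    ext ω
    simp only [Set.mem_setOf_eq, Set.mem_preimage, fppAneg]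
    have hps : ∀ k, k ≤ m → fppPsum m k (fun i : Fin m => W ((i:ℕ)) ω)
        = ∑ i ∈ Finset.range k, W i ω := by
      intro k hk
      simp only [fppPsum]
      refine Finset.sum_congr rfl fun i hi => ?_
      rw [Finset.mem_range] at hi
      have h : i < m := by omega
      simp [h]
    constructor
    · intro h k h1 h2; rw [hps k h2]; exact h k h1 h2
    · intro h k h1 h2; have := h k h1 h2; rwa [hps k h2] at this
  rw [hset]
  exact fpp_prob_tuple hmeas hdist hindep m (fun i => (i:ℕ)) Fin.val_injective
    (measurableSet_fppAneg m)

end FPPConv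

section FPPFinal

variable {Ω : Type*} [MeasurableSpace Ω] {P : Measure Ω} [IsProbabilityMeasure P]
  {μ : Measure ℝ} {W : ℕ → Ω → ℝ}

lemma fpp_window_meas (hmeas : ∀ i, Measurable (W i)) (m : ℕ) :
    MeasurableSet {ω | ∀ k, 1 ≤ k → k ≤ m → (∑ i ∈ Finset.range k, W i ω) < 0} := by
  have hset : {ω | ∀ k, 1 ≤ k → k ≤ m → (∑ i ∈ Finset.range k, W i ω) < 0}
      = (fun ω (i : Fin m) => W ((i:ℕ)) ω) ⁻¹' fppAneg m := by
    ext ω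
    simp only [Set.mem_setOf_eq, Set.mem_preimage, fppAneg]
    have hps : ∀ k, k ≤ m → fppPsum m k (fun i : Fin m => W ((i:ℕ)) ω)
        = ∑ i ∈ Finset.range k, W i ω := by
      intro k hk
      simp only [fppPsum]
      refine Finset.sum_congr rfl fun i hi => ?_
      rw [Finset.mem_range] at hi
      have h : i < m := by omega
      simp [h]
    constructor
    · intro h k h1 h2; rw [hps k h2]; exact h k h1 h2
    · intro h k h1 h2; have := h k h1 h2; rwa [hps k h2] at this
  rw [hset]
  exact (measurable_pi_lambda _ fun i => hmeas _) (measurableSet_fppAneg m)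

lemma fpp_q_eq [NullSingletonClass μ] (hsym : μ.map (fun x => -x) = μ)
    (hmeas : ∀ i, Measurable (W i)) (hdist : ∀ i, P.map (W i) = μ)
    (hindep : iIndepFun W P) :
    ∀ m, (Measure.pi (fun _ : Fin m => μ) (fppAneg m)).toReal = fppA m := by
  haveI : IsProbabilityMeasure μ := by
    rw [← hdist 0]; exact Measure.isProbabilityMeasure_map (hmeas 0).aemeasurable
  intro m
  induction m using Nat.strong_induction_on with
  | _ m ih =>
    cases m with
    | zero =>
      have h0 : fppAneg 0 = Set.univ := by
        ext y
        simp only [fppAneg, Set.mem_setOf_eq, Set.mem_univ, iff_true]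
        intro k h1 h2; omega
      rw [h0]
      simp [fppA_zero]
    | succ n =>
      have hc := fpp_conv hsym hmeas hdist hindep (n+1)
      have hca := fppA_conv (n+1)
      rw [Finset.sum_range_succ', Finset.sum_range_succ] at hc hca
      have hq0 : ((Measure.pi (fun _ : Fin 0 => μ)) (fppAneg 0)).toReal = 1 := by
        have h0 : fppAneg 0 = Set.univ := by
          ext y
          simp only [fppAneg, Set.mem_setOf_eq, Set.mem_univ, iff_true]
          intro k h1 h2; omega
        simp [h0]
      have hinterior : ∀ i ∈ Finset.range n,
          ((Measure.pi (fun _ : Fin (i+1) => μ)) (fppAneg (i+1))).toReal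
            * ((Measure.pi (fun _ : Fin (n+1-(i+1)) => μ)) (fppAneg (n+1-(i+1)))).toReal
          = fppA (i+1) * fppA (n-i) := by
        intro i hi
        rw [Finset.mem_range] at hi
        have e : n+1-(i+1) = n-i := by omega
        rw [e, ih (i+1) (by omega), ih (n-i) (by omega)]
      rw [Finset.sum_congr rfl hinterior] at hc
      have e0 : n+1-(n+1) = 0 := by omega
      rw [e0] at hc
      have e1 : n+1-0 = n+1 := by omega
      rw [e1] at hc
      rw [hq0] at hc
      have hinteriorA : ∀ i ∈ Finset.range n,
          fppA (i+1) * fppA (n+1-(i+1)) = fppA (i+1) * fppA (n-i) := by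
        intro i hi
        rw [Finset.mem_range] at hi
        have e : n+1-(i+1) = n-i := by omega
        rw [e]
      rw [Finset.sum_congr rfl hinteriorA, e0, e1, fppA_zero] at hca
      linarith [hc, hca]

end FPPFinal

open MeasureTheory ProbabilityTheory Finset

/-- For a random walk `S k = ∑_{i<k} W i` with iid increments whose common
law `μ` is symmetric and atomless, the first-passage probability at step `n+1` (staying
strictly negative up to step `n` and being nonnegative at step `n+1`) is at least
`1 / (2(n+1)·√(π(n+1/3)))`. -/
theorem first_passage_probability_lower_bound
    {Ω : Type*} [MeasurableSpace Ω] (P : Measure Ω) [IsProbabilityMeasure P]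
    (μ : Measure ℝ) [NullSingletonClass μ]
    (hsym : μ.map (fun x => -x) = μ)
    (W : ℕ → Ω → ℝ)
    (hmeas : ∀ i, Measurable (W i))
    (hdist : ∀ i, P.map (W i) = μ)
    (hindep : iIndepFun W P)
    (n : ℕ) :
    P {ω | (∀ k, 1 ≤ k → k ≤ n → (∑ i ∈ Finset.range k, W i ω) < 0) ∧
        0 ≤ ∑ i ∈ Finset.range (n + 1), W i ω}
      ≥ ENNReal.ofReal (1 / (2 * (n + 1) * Real.sqrt (Real.pi * (n + 1 / 3)))) := by
  haveI : IsProbabilityMeasure μ := by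
    rw [← hdist 0]; exact Measure.isProbabilityMeasure_map (hmeas 0).aemeasurable
  set An : Set Ω := {ω | ∀ k, 1 ≤ k → k ≤ n → (∑ i ∈ Finset.range k, W i ω) < 0} with hAn
  set An1 : Set Ω := {ω | ∀ k, 1 ≤ k → k ≤ n+1 → (∑ i ∈ Finset.range k, W i ω) < 0} with hAn1
  have hsub : An1 ⊆ An := fun ω h k h1 h2 => h k h1 (by omega)
  have hEventEq : {ω | (∀ k, 1 ≤ k → k ≤ n → (∑ i ∈ Finset.range k, W i ω) < 0) ∧
      0 ≤ ∑ i ∈ Finset.range (n + 1), W i ω} = An \ An1 := by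
    ext ω
    simp only [Set.mem_setOf_eq, Set.mem_diff, hAn, hAn1]
    constructor
    · rintro ⟨h1, h2⟩
      exact ⟨h1, fun hc => absurd (hc (n+1) (by omega) le_rfl) (not_lt.mpr h2)⟩
    · rintro ⟨h1, h2⟩
      refine ⟨h1, ?_⟩
      by_contra hneg
      push_neg at hneg
      refine h2 fun k hk1 hk2 => ?_
      rcases Nat.lt_or_ge k (n+1) with h | h
      · exact h1 k hk1 (by omega)
      · have hk : k = n+1 := by omega
        subst hk
        exact hneg
  rw [hEventEq, ge_iff_le]
  have hAn1meas : MeasurableSet An1 := fpp_window_meas hmeas (n+1)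
  have hdiff : P (An \ An1) = P An - P An1 :=
    measure_diff hsub hAn1meas.nullMeasurableSet (measure_ne_top P An1)
  rw [hdiff, hAn, hAn1, fpp_window hmeas hdist hindep n, fpp_window hmeas hdist hindep (n+1)]
  have hq := fpp_q_eq hsym hmeas hdist hindep
  have h1 : Measure.pi (fun _ : Fin n => μ) (fppAneg n) = ENNReal.ofReal (fppA n) := by
    rw [← hq n]; exact (ENNReal.ofReal_toReal (measure_ne_top _ _)).symm
  have h2 : Measure.pi (fun _ : Fin (n+1) => μ) (fppAneg (n+1))
      = ENNReal.ofReal (fppA (n+1)) := by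
    rw [← hq (n+1)]; exact (ENNReal.ofReal_toReal (measure_ne_top _ _)).symm
  rw [h1, h2, ← ENNReal.ofReal_sub _ (le_of_lt (fppA_pos (n+1)))]
  apply ENNReal.ofReal_le_ofReal
  have hdiffA : fppA n - fppA (n+1) = fppA n / (2*(n:ℝ)+2) := by
    rw [fppA_succ]
    have h : (2*(n:ℝ)+2) ≠ 0 := by positivity
    field_simp
    ring
  rw [hdiffA]
  have hlow := fppA_lower n
  have hs : (0:ℝ) < Real.sqrt (Real.pi * ((n:ℝ)+1/3)) :=
    Real.sqrt_pos.mpr (by positivity)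
  have heq : 1/(2*((n:ℝ)+1) * Real.sqrt (Real.pi * ((n:ℝ)+1/3)))
      = (1/Real.sqrt (Real.pi * ((n:ℝ)+1/3))) / (2*(n:ℝ)+2) := by
    field_simp
  rw [heq]
  gcongr
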